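/- Let G be a finite undirected simple graph, let u and v be distinct non-adjacent vertices with k_G(u) < k_G(v), and let G' = G + (u,v) be the graph obtained by inserting the edge (u,v). If w is any vertex whose coreness changes after the insertion, i.e., k_{G'}(w) ≠ k_G(w), then w is k-reachable from u in the original graph G with k = k_G(u): there is a path from u to w in G all of whose vertices (including u and w) have G-coreness equal to k_G(u). -/

import Mathlib

/-- Degree of `u` in the subgraph of `G` induced by the vertex set `C`. -/
noncomputable def degOn {V : Type*} (G : SimpleGraph V) (C : Set V) (u : V) : ℕ :=
  {v ∈ C | G.Adj u v}.ncard

/-- The coreness of a vertex `u`: the largest `k` such that `u` belongs to some set `C`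
all of whose vertices have degree at least `k` in the subgraph induced by `C`. -/
noncomputable def coreness {V : Type*} (G : SimpleGraph V) (u : V) : ℕ :=
  sSup {k : ℕ | ∃ C : Set V, u ∈ C ∧ ∀ w ∈ C, k ≤ degOn G C w}

section Aux

variable {V : Type*} [Fintype V]

lemma degOn_le_card (G : SimpleGraph V) (C : Set V) (u : V) :
    degOn G C u ≤ Fintype.card V := by
  classical
  have h : {v ∈ C | G.Adj u v}.ncard ≤ (Set.univ : Set V).ncard :=
    Set.ncard_le_ncard (Set.subset_univ _) Set.finite_univ
  simpa [degOn, Set.ncard_univ] using h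

lemma corenessSet_bdd (G : SimpleGraph V) (u : V) :
    BddAbove {k : ℕ | ∃ C : Set V, u ∈ C ∧ ∀ w ∈ C, k ≤ degOn G C w} := by
  refine ⟨Fintype.card V, fun k hk => ?_⟩
  obtain ⟨C, huC, h⟩ := hk
  exact (h u huC).trans (degOn_le_card G C u)

lemma corenessSet_nonempty (G : SimpleGraph V) (u : V) :
    Set.Nonempty {k : ℕ | ∃ C : Set V, u ∈ C ∧ ∀ w ∈ C, k ≤ degOn G C w} :=
  ⟨0, {u}, Set.mem_singleton u, fun _ _ => Nat.zero_le _⟩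

lemma le_coreness {G : SimpleGraph V} {u : V} {k : ℕ} {C : Set V}
    (hu : u ∈ C) (h : ∀ w ∈ C, k ≤ degOn G C w) : k ≤ coreness G u :=
  le_csSup (corenessSet_bdd G u) ⟨C, hu, h⟩

lemma coreness_spec (G : SimpleGraph V) (u : V) :
    ∃ C : Set V, u ∈ C ∧ ∀ w ∈ C, coreness G u ≤ degOn G C w :=
  Nat.sSup_mem (corenessSet_nonempty G u) (corenessSet_bdd G u)

lemma degOn_mono {G : SimpleGraph V} {C C' : Set V} (h : C ⊆ C') (x : V) :
    degOn G C x ≤ degOn G C' x :=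
  Set.ncard_le_ncard (fun y hy => ⟨h hy.1, hy.2⟩) (Set.toFinite _)

lemma degOn_mono_graph {G G' : SimpleGraph V} (h : ∀ a b, G.Adj a b → G'.Adj a b)
    (C : Set V) (x : V) : degOn G C x ≤ degOn G' C x :=
  Set.ncard_le_ncard (fun y hy => ⟨hy.1, h _ _ hy.2⟩) (Set.toFinite _)

/-- Every vertex of the `t`-core has degree at least `t` within the `t`-core. -/
lemma core_degOn {G : SimpleGraph V} {t : ℕ} {x : V} (hx : t ≤ coreness G x) :
    t ≤ degOn G {y | t ≤ coreness G y} x := by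
  obtain ⟨C, hxC, hC⟩ := coreness_spec G x
  have hsub : C ⊆ {y | t ≤ coreness G y} := fun y hy =>
    hx.trans (le_coreness hy hC)
  calc t ≤ coreness G x := hx
    _ ≤ degOn G C x := hC x hxC
    _ ≤ degOn G {y | t ≤ coreness G y} x := degOn_mono hsub x

end Aux

/-- If the edge `(u,v)` with `k_G(u) < k_G(v)` is inserted, then every vertex `w` whose
coreness changes is `k`-reachable from `u` in the original graph `G` with `k = k_G(u)`:
there is a path from `u` to `w` in `G` all of whose vertices have coreness `k_G(u)`. -/
theorem candidate_of_insert_lt {V : Type*} [Fintype V] (G G' : SimpleGraph V)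
    (u v : V) (huv : u ≠ v) (hna : ¬ G.Adj u v)
    (hG' : ∀ a b, G'.Adj a b ↔ G.Adj a b ∨ (a = u ∧ b = v) ∨ (a = v ∧ b = u))
    (hk : coreness G u < coreness G v)
    (w : V) (hw : coreness G' w ≠ coreness G w) :
    ∃ p : G.Walk u w, p.IsPath ∧ ∀ x ∈ p.support, coreness G x = coreness G u := by
  classical
  set k := coreness G u with hkdef
  -- monotonicity of coreness under edge addition
  have hadj_mono : ∀ a b, G.Adj a b → G'.Adj a b := fun a b h => (hG' a b).mpr (Or.inl h)
  have hmono : ∀ x, coreness G x ≤ coreness G' x := by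
    intro x
    obtain ⟨C, hxC, hC⟩ := coreness_spec G x
    exact le_coreness hxC fun y hy => (hC y hy).trans (degOn_mono_graph hadj_mono C y)
  set m := coreness G' w with hmdef
  have hm : coreness G w < m := lt_of_le_of_ne (hmono w) (Ne.symm hw)
  obtain ⟨C, hwC, hC⟩ := coreness_spec G' w
  -- if x ∈ C is not u or v, its G'-degree in any set equals its G-degree
  have hset : ∀ (D : Set V) (x : V), x ≠ u → x ≠ v → degOn G' D x = degOn G D x := by
    intro D x hxu hxv
    unfold degOn
    congr 1
    ext y
    simp only [Set.mem_setOf_eq]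
    constructor
    · rintro ⟨hyD, hadj⟩
      rcases (hG' x y).mp hadj with h | ⟨h1, h2⟩ | ⟨h1, h2⟩
      · exact ⟨hyD, h⟩
      · exact absurd h1 hxu
      · exact absurd h1 hxv
    · rintro ⟨hyD, hadj⟩
      exact ⟨hyD, (hG' x y).mpr (Or.inl hadj)⟩
  -- G'-degree exceeds G-degree by at most one
  have hle1 : ∀ (D : Set V) (x : V), degOn G' D x ≤ degOn G D x + 1 := by
    intro D x
    unfold degOn
    have hsub : {y ∈ D | G'.Adj x y} ⊆ insert (if x = u then v else u) {y ∈ D | G.Adj x y} := by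
      rintro y ⟨hyD, hadj⟩
      rcases (hG' x y).mp hadj with h | ⟨h1, h2⟩ | ⟨h1, h2⟩
      · exact Set.mem_insert_of_mem _ ⟨hyD, h⟩
      · simp [h1, h2]
      · simp [h1, h2, Ne.symm huv]
    calc {y ∈ D | G'.Adj x y}.ncard
        ≤ (insert (if x = u then v else u) {y ∈ D | G.Adj x y}).ncard :=
          Set.ncard_le_ncard hsub (Set.toFinite _)
      _ ≤ {y ∈ D | G.Adj x y}.ncard + 1 := Set.ncard_insert_le _ _
  -- both endpoints are in C
  have huvC : u ∈ C ∧ v ∈ C := by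
    by_contra h
    have hor : u ∉ C ∨ v ∉ C := by tauto
    have heq : ∀ x ∈ C, degOn G' C x = degOn G C x := by
      intro x hx
      rcases hor with hu | hv
      · have hxu : x ≠ u := fun h => hu (h ▸ hx)
        by_cases hxv : x = v
        · subst hxv
          unfold degOn
          congr 1
          ext y
          simp only [Set.mem_setOf_eq]
          constructor
          · rintro ⟨hyD, hadj⟩
            rcases (hG' x y).mp hadj with h | ⟨h1, h2⟩ | ⟨h1, h2⟩
            · exact ⟨hyD, h⟩
            · exact absurd h1 hxu
            · subst h2; exact absurd hyD hu
          · rintro ⟨hyD, hadj⟩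
            exact ⟨hyD, (hG' x y).mpr (Or.inl hadj)⟩
        · exact hset C x hxu hxv
      · have hxv : x ≠ v := fun h => hv (h ▸ hx)
        by_cases hxu : x = u
        · subst hxu
          unfold degOn
          congr 1
          ext y
          simp only [Set.mem_setOf_eq]
          constructor
          · rintro ⟨hyD, hadj⟩
            rcases (hG' x y).mp hadj with h | ⟨h1, h2⟩ | ⟨h1, h2⟩
            · exact ⟨hyD, h⟩
            · subst h2; exact absurd hyD hv
            · exact absurd h1 hxv
          · rintro ⟨hyD, hadj⟩
            exact ⟨hyD, (hG' x y).mpr (Or.inl hadj)⟩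
        · exact hset C x hxu hxv
    have : m ≤ coreness G w :=
      le_coreness hwC fun y hy => (heq y hy) ▸ (hC y hy)
    omega
  obtain ⟨huC, hvC⟩ := huvC
  -- every vertex of C has G-coreness at least m - 1
  have hCcore : ∀ x ∈ C, m - 1 ≤ coreness G x := by
    intro x hx
    refine le_coreness hx fun y hy => ?_
    have h1 := hC y hy
    have h2 := hle1 C y
    omega
  have hmle : m ≤ k + 1 := by
    have := hCcore u huC
    omega
  -- m cannot be ≤ k : otherwise C ∪ (m-core of G) witnesses coreness G w ≥ m
  have hmge : k + 1 ≤ m := by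
    by_contra h
    have hmk : m ≤ k := by omega
    set S : Set V := C ∪ {y | m ≤ coreness G y} with hSdef
    have hdegS : ∀ x ∈ S, m ≤ degOn G S x := by
      intro x hx
      by_cases hcx : m ≤ coreness G x
      · calc m ≤ degOn G {y | m ≤ coreness G y} x := core_degOn hcx
          _ ≤ degOn G S x := degOn_mono Set.subset_union_right x
      · rcases hx with hxC | hxc
        · have hxu : x ≠ u := by rintro rfl; omega
          have hxv : x ≠ v := by rintro rfl; omega
          calc m ≤ degOn G' C x := hC x hxC
            _ = degOn G C x := hset C x hxu hxv
            _ ≤ degOn G S x := degOn_mono Set.subset_union_left x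
        · exact absurd hxc hcx
    have : m ≤ coreness G w := le_coreness (Set.mem_union_left _ hwC) hdegS
    omega
  have hmk1 : m = k + 1 := le_antisymm hmle hmge
  have hcw : coreness G w = k := by
    have := hCcore w hwC
    omega
  -- reachability predicate
  set P : V → Prop := fun x => ∃ q : G.Walk w x, ∀ y ∈ q.support, coreness G y = k with hPdef
  by_cases hPu : P u
  · obtain ⟨q, hq⟩ := hPu
    refine ⟨q.reverse.bypass, q.reverse.bypass_isPath, fun x hx => ?_⟩
    have hx' := q.reverse.support_bypass_subset hx
    rw [SimpleGraph.Walk.support_reverse, List.mem_reverse] at hx'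
    exact hq x hx'
  · -- contradiction: reachable part of C plus the (k+1)-core witnesses coreness G w ≥ k+1
    exfalso
    set S : Set V := {x | (P x ∧ x ∈ C) ∨ k + 1 ≤ coreness G x} with hSdef
    have hwS : w ∈ S := Or.inl ⟨⟨SimpleGraph.Walk.nil, by simpa using hcw⟩, hwC⟩
    have hdegS : ∀ x ∈ S, k + 1 ≤ degOn G S x := by
      intro x hx
      rcases hx with ⟨⟨q, hq⟩, hxC⟩ | hcx
      · have hcxk : coreness G x = k := hq x q.end_mem_support
        have hxu : x ≠ u := by
          rintro rfl
          exact hPu ⟨q, hq⟩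
        have hxv : x ≠ v := by
          rintro rfl
          omega
        have hCS : {y ∈ C | G.Adj x y} ⊆ {y ∈ S | G.Adj x y} := by
          rintro y ⟨hyC, hadj⟩
          refine ⟨?_, hadj⟩
          have hyk : k ≤ coreness G y := by
            have := hCcore y hyC
            omega
          by_cases hyk' : coreness G y = k
          · refine Or.inl ⟨⟨q.concat hadj, ?_⟩, hyC⟩
            intro z hz
            rw [SimpleGraph.Walk.support_concat, List.mem_append] at hz
            rcases hz with hz | hz
            · exact hq z hz
            · simp only [List.mem_singleton] at hz
              subst hz; exact hyk'
          · exact Or.inr (by omega)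
        calc k + 1 = m := hmk1.symm
          _ ≤ degOn G' C x := hC x hxC
          _ = degOn G C x := hset C x hxu hxv
          _ ≤ degOn G S x := Set.ncard_le_ncard hCS (Set.toFinite _)
      · calc k + 1 ≤ degOn G {y | k + 1 ≤ coreness G y} x := core_degOn hcx
          _ ≤ degOn G S x := degOn_mono (fun y hy => Or.inr hy) x
    have : k + 1 ≤ coreness G w := le_coreness hwS hdegS
    omega
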